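/- Let α ≥ 2 and L be natural numbers with ν = ν₂(α), and suppose α ≡ 2^ν (mod 2^L) with ν + 1 < L. Then (α - 1 + 2^{ν+1}) ⊇_2 2^{ν+1} holds, but (α + 2^{ν+2}) ⊇_2 2^{ν+1} fails. -/
import Mathlib


/-- `a ⊇_2 b`: every binary digit of `b` is `0` or equals the corresponding digit of `a`. -/
def Sup2 (a b : ℕ) : Prop :=
  ∀ i, b.testBit i = false ∨ b.testBit i = a.testBit i

lemma testBit_add_mul_aux (e q r : ℕ) (hr : r < 2 ^ e) :
    (2 ^ e * q + r).testBit e = decide (q % 2 = 1) := by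
  rw [Nat.testBit_eq_decide_div_mod_eq, Nat.mul_add_div (by positivity), Nat.div_eq_of_lt hr,
    Nat.add_zero]

theorem stmt_11 (α L : ℕ) (hα : 2 ≤ α)
    (hνL : padicValNat 2 α + 1 < L)
    (hmod : 2 ^ L ∣ (α - 2 ^ padicValNat 2 α)) :
    Sup2 (α - 1 + 2 ^ (padicValNat 2 α + 1)) (2 ^ (padicValNat 2 α + 1)) ∧
      ¬ Sup2 (α + 2 ^ (padicValNat 2 α + 2)) (2 ^ (padicValNat 2 α + 1)) := by
  set ν := padicValNat 2 α with hν
  have hdvd : 2 ^ ν ∣ α := pow_padicValNat_dvd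
  have hle : 2 ^ ν ≤ α := Nat.le_of_dvd (by omega) hdvd
  obtain ⟨k, hk⟩ := hmod
  have hαeq : α = 2 ^ ν + 2 ^ L * k := by omega
  obtain ⟨d, hd⟩ : ∃ d, L = ν + 2 + d := ⟨L - (ν + 2), by omega⟩
  have h2ν : 1 ≤ 2 ^ ν := Nat.one_le_two_pow
  have hL : (2 : ℕ) ^ L = 4 * 2 ^ ν * 2 ^ d := by
    rw [hd]; ring
  have hν1 : (2 : ℕ) ^ (ν + 1) = 2 * 2 ^ ν := by ring
  have hν2 : (2 : ℕ) ^ (ν + 2) = 4 * 2 ^ ν := by ring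
  have hz : α = 2 ^ ν + 4 * (2 ^ ν * (2 ^ d * k)) := by rw [hαeq, hL]; ring
  have ha : α - 1 + 2 ^ (ν + 1) = 2 ^ (ν + 1) * (1 + 2 * (2 ^ d * k)) + (2 ^ ν - 1) := by
    rw [hν1, show 2 * 2 ^ ν * (1 + 2 * (2 ^ d * k)) = 2 * 2 ^ ν + 4 * (2 ^ ν * (2 ^ d * k)) from by ring]
    omega
  have hb : α + 2 ^ (ν + 2) = 2 ^ (ν + 1) * (2 + 2 * (2 ^ d * k)) + 2 ^ ν := by
    rw [hν1, hν2, show 2 * 2 ^ ν * (2 + 2 * (2 ^ d * k)) = 4 * 2 ^ ν + 4 * (2 ^ ν * (2 ^ d * k)) from by ring]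
    omega
  have hbitA : (α - 1 + 2 ^ (ν + 1)).testBit (ν + 1) = true := by
    rw [ha, testBit_add_mul_aux _ _ _ (by omega)]
    simp [Nat.add_mul_mod_self_left]
  have hbitB : (α + 2 ^ (ν + 2)).testBit (ν + 1) = false := by
    rw [hb, testBit_add_mul_aux _ _ _ (by omega)]
    simp [Nat.add_mul_mod_self_left]
  constructor
  · intro i
    rcases eq_or_ne i (ν + 1) with rfl | hi
    · right; rw [Nat.testBit_two_pow_self, hbitA]
    · left; exact Nat.testBit_two_pow_of_ne (Ne.symm hi)
  · intro h
    rcases h (ν + 1) with h' | h'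
    · rw [Nat.testBit_two_pow_self] at h'; simp at h'
    · rw [Nat.testBit_two_pow_self, hbitB] at h'; simp at h'
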